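/- For double forms ω and θ of the same bidegree (p,q) on an oriented n-dimensional inner product space, the pointwise inner product satisfies ⟨ω,θ⟩ = *(ω·*θ), where · is the product of double forms and * is the generalized Hodge star. -/

import Mathlib

open scoped BigOperators
open scoped Classical

noncomputable section

/-- A `(p,q)`-double form on `ℝⁿ`, given by its components with respect to the
standard orthonormal basis: a scalar-valued function of a row multi-index and a
column multi-index. -/
def DForm (n p q : ℕ) : Type := (Fin p → Fin n) → (Fin q → Fin n) → ℝ

namespace DForm

variable {n : ℕ}

/-- Transport a double form along equalities of the bidegrees. -/
def cast' {p q p' q' : ℕ} (hp : p = p') (hq : q = q') (ω : DForm n p q) :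
    DForm n p' q' :=
  fun I J => ω (fun a => I (Fin.cast hp a)) (fun b => J (Fin.cast hq b))

/-- A double form is alternating in each of its two blocks of arguments. -/
def IsAlt {p q : ℕ} (ω : DForm n p q) : Prop :=
  (∀ (σ : Equiv.Perm (Fin p)) (I : Fin p → Fin n) (J : Fin q → Fin n),
      ω (I ∘ σ) J = ((Equiv.Perm.sign σ : ℤ) : ℝ) * ω I J) ∧
  (∀ (τ : Equiv.Perm (Fin q)) (I : Fin p → Fin n) (J : Fin q → Fin n),
      ω I (J ∘ τ) = ((Equiv.Perm.sign τ : ℤ) : ℝ) * ω I J) ∧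
  (∀ (I : Fin p → Fin n) (J : Fin q → Fin n),
      (¬ Function.Injective I ∨ ¬ Function.Injective J) → ω I J = 0)

/-- A `(p,p)`-double form is symmetric. -/
def IsSym {p : ℕ} (ω : DForm n p p) : Prop := ∀ I J, ω I J = ω J I

/-- The exterior (Kulkarni–Nomizu type) product of double forms:
`(α₁⊗β₁)·(α₂⊗β₂) = (α₁∧α₂)⊗(β₁∧β₂)` in components. -/
def mul {p q r s : ℕ} (ω : DForm n p q) (θ : DForm n r s) :
    DForm n (p + r) (q + s) :=
  fun I J =>
    (((p.factorial * r.factorial * q.factorial * s.factorial : ℕ) : ℝ))⁻¹ *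
      ∑ σ : Equiv.Perm (Fin (p + r)), ∑ τ : Equiv.Perm (Fin (q + s)),
        ((Equiv.Perm.sign σ : ℤ) : ℝ) * ((Equiv.Perm.sign τ : ℤ) : ℝ) *
          ω (fun a => I (σ (Fin.castAdd r a))) (fun b => J (τ (Fin.castAdd s b))) *
          θ (fun a => I (σ (Fin.natAdd p a))) (fun b => J (τ (Fin.natAdd q b)))

/-- The contraction map `c : D^{p+1,q+1} → D^{p,q}` (trace over the orthonormal
basis in the first slot of each block). -/
def contr {p q : ℕ} (ω : DForm n (p + 1) (q + 1)) : DForm n p q :=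
  fun I J => ∑ i : Fin n, ω (Fin.cons i I) (Fin.cons i J)

/-- Total version of the contraction (zero when a bidegree is `0`). -/
def contr' : {p q : ℕ} → DForm n p q → DForm n (p - 1) (q - 1)
  | _ + 1, _ + 1, ω => contr ω
  | 0, _, _ => fun _ _ => 0
  | _ + 1, 0, _ => fun _ _ => 0

/-- Iterated contraction `c^k : D^{p+k,q+k} → D^{p,q}`. -/
def cIter {p q : ℕ} : (k : ℕ) → DForm n (p + k) (q + k) → DForm n p q
  | 0, ω => ω
  | k + 1, ω => cIter k (contr ω)

/-- The full contraction `c^p` of a `(p,p)`-double form, a scalar. -/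
def fullc {p : ℕ} (ω : DForm n p p) : ℝ :=
  cIter (p := 0) (q := 0) p
    (cast' (Nat.zero_add p).symm (Nat.zero_add p).symm ω) Fin.elim0 Fin.elim0

/-- The metric of `ℝⁿ` as a `(1,1)`-double form. -/
def gd : DForm n 1 1 := fun I J => if I 0 = J 0 then 1 else 0

/-- Powers `g^p` of the metric in the ring of double forms. -/
def gpow : (p : ℕ) → DForm n p p
  | 0 => fun _ _ => 1
  | p + 1 => mul (gpow p) gd

/-- Powers `ω^k` of a `(p,p)`-double form in the ring of double forms. -/
def pow {p : ℕ} (ω : DForm n p p) : (k : ℕ) → DForm n (p * k) (p * k)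
  | 0 => fun _ _ => 1
  | k + 1 => mul (pow ω k) ω

/-- The natural pointwise inner product on `(p,q)`-double forms. -/
def innerPQ {p q : ℕ} (ω θ : DForm n p q) : ℝ :=
  (((p.factorial * q.factorial : ℕ) : ℝ))⁻¹ *
    ∑ I : Fin p → Fin n, ∑ J : Fin q → Fin n, ω I J * θ I J

/-- The sign of the permutation of `{1,…,n}` obtained by concatenating the
multi-indices `K` and `I` (zero if it is not a permutation). -/
def epsSign {p : ℕ} (hp : p ≤ n) (K : Fin p → Fin n) (I : Fin (n - p) → Fin n) : ℝ :=
  if h : Function.Bijective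
      (fun a : Fin n => Fin.append K I (Fin.cast (by omega) a)) then
    ((Equiv.Perm.sign (Equiv.ofBijective _ h) : ℤ) : ℝ)
  else 0

/-- The generalized Hodge star operator on double forms, acting as the usual
Hodge star on each factor. -/
def hstar {p q : ℕ} (hp : p ≤ n) (hq : q ≤ n) (ω : DForm n p q) :
    DForm n (n - p) (n - q) :=
  fun I J =>
    (((p.factorial * q.factorial : ℕ) : ℝ))⁻¹ *
      ∑ K : Fin p → Fin n, ∑ L : Fin q → Fin n,
        epsSign hp K I * epsSign hq L J * ω K L

/-- The operator `F_h` associated with a symmetric bilinear form `h`: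
in an orthonormal basis diagonalizing `h` it multiplies the `(I,J)` component by
the sum of the eigenvalues of `h` over the indices in `I` and `J`.
Coordinate-free version: insert the endomorphism of `h` in each slot. -/
def Fh {p q : ℕ} (h : Fin n → Fin n → ℝ) (ω : DForm n p q) : DForm n p q :=
  fun I J =>
    (∑ k : Fin p, ∑ i : Fin n, h (I k) i * ω (Function.update I k i) J) +
    (∑ k : Fin q, ∑ i : Fin n, h (J k) i * ω I (Function.update J k i))

/-- A bilinear form on `ℝⁿ` viewed as a `(1,1)`-double form. -/
def ofBilin (h : Fin n → Fin n → ℝ) : DForm n 1 1 := fun I J => h (I 0) (J 0)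

/-- The first Bianchi identity for a `(2,2)`-double form. -/
def Bianchi1 (R : DForm n 2 2) : Prop :=
  ∀ x y z u : Fin n,
    R ![x, y] ![z, u] + R ![y, z] ![x, u] + R ![z, x] ![y, u] = 0

end DForm

end

namespace StarAux

open Equiv

noncomputable def sgn {α : Type*} [DecidableEq α] [Fintype α] (σ : Equiv.Perm α) : ℝ :=
  ((Equiv.Perm.sign σ : ℤ) : ℝ)

variable {α : Type*} [DecidableEq α] [Fintype α]

lemma sgn_def {α : Type*} [DecidableEq α] [Fintype α] (σ : Equiv.Perm α) :
    sgn σ = ((Equiv.Perm.sign σ : ℤ) : ℝ) := rfl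

lemma sgn_sq (σ : Equiv.Perm α) : sgn σ * sgn σ = 1 := by
  unfold sgn
  rcases Int.units_eq_one_or (Equiv.Perm.sign σ) with h | h <;> simp [h]

lemma sgn_pm (σ : Equiv.Perm α) : sgn σ = 1 ∨ sgn σ = -1 := by
  unfold sgn
  rcases Int.units_eq_one_or (Equiv.Perm.sign σ) with h | h <;> simp [h]

lemma sgn_mul (σ τ : Equiv.Perm α) : sgn (σ * τ) = sgn σ * sgn τ := by
  unfold sgn; rw [map_mul]; push_cast; ring

lemma sgn_trans (σ τ : Equiv.Perm α) : sgn (σ.trans τ) = sgn σ * sgn τ := by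
  rw [show σ.trans τ = τ * σ from rfl, sgn_mul]; ring

/-- Sum of a function supported on an injectively parametrized family. -/
lemma sum_support {n m k : ℕ} (f : (Fin m → Fin n) → ℝ)
    (g : Equiv.Perm (Fin k) → (Fin m → Fin n))
    (hg : Function.Injective g) (h0 : ∀ K, (∀ π, K ≠ g π) → f K = 0) :
    ∑ K : Fin m → Fin n, f K = ∑ π : Equiv.Perm (Fin k), f (g π) := by
  classical
  rw [← Finset.sum_image (g := g) (f := f) (fun x _ y _ h => hg h)]
  refine (Finset.sum_subset (Finset.subset_univ _) ?_).symm
  intro K _ hK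
  refine h0 K fun π hπ => hK ?_
  exact Finset.mem_image.mpr ⟨π, Finset.mem_univ _, hπ.symm⟩

end StarAux

namespace StarAux2
open StarAux Equiv

/-- casts collapse -/
lemma cast_cast {n N : ℕ} (h : N = n) (a : Fin N) :
    Fin.cast h.symm (Fin.cast h a) = a := rfl

lemma perm_merge {n N : ℕ} (hN : N = n) (F : (Fin N → Fin n) → ℝ) :
    ∑ ρ : Equiv.Perm (Fin n), ∑ σ : Equiv.Perm (Fin N),
        sgn ρ * sgn σ * F (fun a => ρ (Fin.cast hN (σ a)))
      = (N.factorial : ℝ) * ∑ μ : Equiv.Perm (Fin n), sgn μ * F (fun a => μ (Fin.cast hN a)) := by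
  rw [Finset.sum_comm]
  have key : ∀ σ : Equiv.Perm (Fin N),
      ∑ ρ : Equiv.Perm (Fin n), sgn ρ * sgn σ * F (fun a => ρ (Fin.cast hN (σ a)))
        = ∑ μ : Equiv.Perm (Fin n), sgn μ * F (fun a => μ (Fin.cast hN a)) := by
    intro σ
    set σ' : Equiv.Perm (Fin n) := (finCongr hN).permCongr σ with hσ'
    have hsgn : sgn σ' = sgn σ := by
      unfold sgn; rw [hσ', Equiv.Perm.sign_permCongr]
    refine Fintype.sum_bijective (fun ρ => ρ * σ')
      (Group.mulRight_bijective _) _ _ ?_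
    intro ρ
    have harg : (fun a : Fin N => (ρ * σ') (Fin.cast hN a)) =
        (fun a : Fin N => ρ (Fin.cast hN (σ a))) := by
      funext a
      simp [hσ', Equiv.permCongr_apply, cast_cast]
    rw [sgn_mul, hsgn, harg]
  rw [Finset.sum_congr rfl fun σ _ => key σ, Finset.sum_const]
  simp [Fintype.card_perm, mul_comm]

lemma append_cast_top {n P : ℕ} (hP : P = n) (pf : n = P + (n - P))
    (K : Fin P → Fin n) (I₀ : Fin (n - P) → Fin n) :
    (fun a : Fin n => Fin.append K I₀ (Fin.cast pf a)) = fun a => K (Fin.cast hP.symm a) := by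
  funext a
  have h1 : Fin.cast pf a = Fin.castAdd (n - P) (Fin.cast hP.symm a) := by
    apply Fin.ext; rfl
  rw [h1, Fin.append_left]

lemma sum_eps_top {n P : ℕ} (hPle : P ≤ n) (hP : P = n) (I₀ : Fin (n - P) → Fin n)
    (f : (Fin P → Fin n) → ℝ) :
    ∑ K : Fin P → Fin n, DForm.epsSign hPle K I₀ * f K
      = ∑ ρ : Equiv.Perm (Fin n), sgn ρ * f (fun b => ρ (Fin.cast hP b)) := by
  unfold DForm.epsSign
  have hg : Function.Injective (fun (ρ : Equiv.Perm (Fin n)) (b : Fin P) => ρ (Fin.cast hP b)) := by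
    intro ρ ρ' h
    apply Equiv.ext; intro x
    have := congrFun h (Fin.cast hP.symm x)
    simpa using this
  rw [sum_support _ _ hg ?_]
  · refine Finset.sum_congr rfl fun ρ _ => ?_
    congr 1
    rw [append_cast_top hP]
    have h2 : (fun a : Fin n =>
        (fun b : Fin P => ρ (Fin.cast hP b)) (Fin.cast hP.symm a)) = ⇑ρ := rfl
    rw [h2, dif_pos ρ.bijective]
    have h3 : Equiv.ofBijective ⇑ρ ρ.bijective = ρ := Equiv.ext fun x => rfl
    rw [h3]; rfl
  · intro K hK
    rw [append_cast_top hP]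
    by_cases h : Function.Bijective (fun a : Fin n => K (Fin.cast hP.symm a))
    · exact absurd (funext fun b => rfl : K = fun b => (Equiv.ofBijective _ h) (Fin.cast hP b))
        (hK (Equiv.ofBijective _ h))
    · rw [dif_neg h, zero_mul]

lemma shuffle {A B C D : Type*} [Fintype A] [Fintype B] [Fintype C] [Fintype D]
    (a : A → ℝ) (b : B → ℝ) (cc : ℝ) (c : C → ℝ) (d : D → ℝ) (t : A → C → B → D → ℝ) :
    ∑ x : A, a x * ∑ y : B, b y * (cc * ∑ z : C, ∑ w : D, c z * d w * t x z y w)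
      = cc * ∑ x : A, ∑ z : C, a x * c z * ∑ y : B, ∑ w : D, b y * d w * t x z y w := by
  simp only [Finset.mul_sum]
  refine Finset.sum_congr rfl fun x _ => ?_
  rw [Finset.sum_comm]
  refine Finset.sum_congr rfl fun z _ => ?_
  refine Finset.sum_congr rfl fun y _ => ?_
  refine Finset.sum_congr rfl fun w _ => ?_
  ring

lemma sum_eps_block {n p : ℕ} (hp : p ≤ n) (hN : p + (n - p) = n) (μ : Equiv.Perm (Fin n))
    (φ : (Fin p → Fin n) → ℝ)
    (hφ : ∀ (π : Equiv.Perm (Fin p)) (K : Fin p → Fin n), φ (K ∘ ⇑π) = sgn π * φ K) :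
    ∑ K : Fin p → Fin n,
        DForm.epsSign hp K (fun b => μ (Fin.cast hN (Fin.natAdd p b))) * φ K
      = (p.factorial : ℝ) * (sgn μ *
          φ (fun a => μ (Fin.cast hN (Fin.castAdd (n - p) a)))) := by
  classical
  set μa : Fin p → Fin n := fun a => μ (Fin.cast hN (Fin.castAdd (n - p) a)) with hμa
  set Iμ : Fin (n - p) → Fin n := fun b => μ (Fin.cast hN (Fin.natAdd p b)) with hIμ
  set E : (Fin p ⊕ Fin (n - p)) ≃ Fin n := finSumFinEquiv.trans (finCongr hN) with hE
  have appEq : ∀ (π : Equiv.Perm (Fin p)) (pf : n = p + (n - p)),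
      (fun a : Fin n => Fin.append (μa ∘ ⇑π) Iμ (Fin.cast pf a))
        = ⇑((E.permCongr (Equiv.sumCongr π (Equiv.refl (Fin (n - p))))).trans μ) := by
    intro π pf
    funext a
    show Fin.append (μa ∘ ⇑π) Iμ (Fin.cast pf a)
        = μ (E ((Equiv.sumCongr π (Equiv.refl (Fin (n - p)))) (E.symm a)))
    by_cases h : (a : ℕ) < p
    · have e1 : Fin.cast pf a = Fin.castAdd (n - p) ⟨a.1, h⟩ := rfl
      have e2 : E.symm a = Sum.inl ⟨a.1, h⟩ := by
        apply E.injective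
        rw [Equiv.apply_symm_apply]
        apply Fin.ext; simp [hE]
      rw [e1, Fin.append_left, e2]
      simp [hE, hμa]
    · have hb : a.1 - p < n - p := by omega
      have e1 : Fin.cast pf a = Fin.natAdd p ⟨a.1 - p, hb⟩ := by
        apply Fin.ext; simp; omega
      have e2 : E.symm a = Sum.inr ⟨a.1 - p, hb⟩ := by
        apply E.injective
        rw [Equiv.apply_symm_apply]
        apply Fin.ext; simp [hE]; omega
      rw [e1, Fin.append_right, e2]
      simp [hE, hIμ]
  have hμainj : Function.Injective μa := by
    intro x y hxy
    have hv := congrArg Fin.val (μ.injective hxy)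
    exact Fin.ext hv
  have hg : Function.Injective (fun π : Equiv.Perm (Fin p) => μa ∘ ⇑π) := by
    intro π π' hh
    apply Equiv.ext
    intro x
    exact hμainj (congrFun hh x)
  rw [sum_support _ _ hg ?_]
  · have hterm : ∀ π : Equiv.Perm (Fin p),
        DForm.epsSign hp (μa ∘ ⇑π) Iμ * φ (μa ∘ ⇑π) = sgn μ * φ μa := by
      intro π
      have heps : DForm.epsSign hp (μa ∘ ⇑π) Iμ = sgn μ * sgn π := by
        unfold DForm.epsSign
        rw [appEq π]
        rw [dif_pos (Equiv.bijective _)]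
        have h3 : Equiv.ofBijective
            ⇑((E.permCongr (Equiv.sumCongr π (Equiv.refl (Fin (n - p))))).trans μ)
            (Equiv.bijective _)
            = (E.permCongr (Equiv.sumCongr π (Equiv.refl (Fin (n - p))))).trans μ :=
          Equiv.ext fun x => rfl
        rw [h3]
        show sgn ((E.permCongr (Equiv.sumCongr π (Equiv.refl (Fin (n - p))))).trans μ) = _
        rw [sgn_trans]
        have h4 : sgn (E.permCongr (Equiv.sumCongr π (Equiv.refl (Fin (n - p))))) = sgn π := by
          unfold sgn
          rw [Equiv.Perm.sign_permCongr, Equiv.Perm.sign_sumCongr]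
          simp
        rw [h4]; ring
      rw [heps, hφ π μa]
      calc (sgn μ * sgn π) * (sgn π * φ μa) = sgn μ * (sgn π * sgn π) * φ μa := by ring
        _ = sgn μ * φ μa := by rw [sgn_sq]; ring
    rw [Finset.sum_congr rfl fun π _ => hterm π, Finset.sum_const]
    simp [Fintype.card_perm, mul_assoc]
  · intro K hK
    by_cases h : Function.Bijective (fun a : Fin n => Fin.append K Iμ (Fin.cast hN.symm a))
    · exfalso
      have hKA : ∀ b : Fin p,
          Fin.append K Iμ (Fin.cast hN.symm (⟨b.1, by omega⟩ : Fin n)) = K b := by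
        intro b
        have e1 : Fin.cast hN.symm (⟨b.1, by omega⟩ : Fin n) = Fin.castAdd (n - p) b := rfl
        rw [e1, Fin.append_left]
      have hlt : ∀ b : Fin p, ((μ.symm (K b) : Fin n) : ℕ) < p := by
        intro b
        by_contra hge
        push_neg at hge
        set x : Fin n := μ.symm (K b) with hx
        have hbx : x.1 < n := x.isLt
        have e1 : Fin.cast hN.symm x = Fin.natAdd p ⟨x.1 - p, by omega⟩ := by
          apply Fin.ext; simp; omega
        have hAx : Fin.append K Iμ (Fin.cast hN.symm x) = K b := by
          rw [e1, Fin.append_right]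
          have e2 : Fin.cast hN (Fin.natAdd p ⟨x.1 - p, by omega⟩) = x := by
            apply Fin.ext; simp; omega
          show μ (Fin.cast hN (Fin.natAdd p ⟨x.1 - p, by omega⟩)) = K b
          rw [e2, hx, Equiv.apply_symm_apply]
        have hne : (⟨b.1, by omega⟩ : Fin n) ≠ x := by
          intro hcc
          have hv := congrArg Fin.val hcc
          simp at hv
          omega
        refine hne (h.injective ?_)
        show Fin.append K Iμ (Fin.cast hN.symm (⟨b.1, by omega⟩ : Fin n))
            = Fin.append K Iμ (Fin.cast hN.symm x)
        rw [hKA b, hAx]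
      set π₀ : Fin p → Fin p := fun b => ⟨((μ.symm (K b) : Fin n) : ℕ), hlt b⟩ with hπ₀
      have hKinj : Function.Injective K := by
        intro b b' hbb
        have h2 : Fin.append K Iμ (Fin.cast hN.symm (⟨b.1, by omega⟩ : Fin n))
            = Fin.append K Iμ (Fin.cast hN.symm (⟨b'.1, by omega⟩ : Fin n)) := by
          rw [hKA b, hKA b', hbb]
        have h3 := h.injective h2
        have hv := congrArg Fin.val h3
        simp at hv
        exact Fin.ext hv
      have hπinj : Function.Injective π₀ := by
        intro b b' hbb
        have hv := congrArg Fin.val hbb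
        simp [hπ₀] at hv
        have h5 : μ.symm (K b) = μ.symm (K b') := Fin.ext hv
        exact hKinj (μ.symm.injective h5)
      have hπbij := Finite.injective_iff_bijective.mp hπinj
      apply hK (Equiv.ofBijective π₀ hπbij)
      funext b
      show K b = μa (π₀ b)
      have e2 : Fin.cast hN (Fin.castAdd (n - p) (π₀ b)) = μ.symm (K b) := by
        apply Fin.ext; simp [hπ₀]
      show K b = μ (Fin.cast hN (Fin.castAdd (n - p) (π₀ b)))
      rw [e2, Equiv.apply_symm_apply]
    · unfold DForm.epsSign
      rw [dif_neg h, zero_mul]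

lemma exists_extension {n p : ℕ} (hp : p ≤ n) (hN : p + (n - p) = n)
    (I : Fin p → Fin n) (hI : Function.Injective I) :
    ∃ μ : Equiv.Perm (Fin n),
      (fun a : Fin p => μ (Fin.cast hN (Fin.castAdd (n - p) a))) = I := by
  classical
  set S : Finset (Fin n) := Finset.image I Finset.univ with hS
  have hcard : Sᶜ.card = n - p := by
    rw [Finset.card_compl, Finset.card_image_of_injective _ hI]
    simp
  set e2 : Fin (n - p) ≃ ↥Sᶜ := (Finset.equivFinOfCardEq hcard).symm with he2
  set g : Fin n → Fin n := fun x =>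
    if h : (x : ℕ) < p then I ⟨x.1, h⟩ else (e2 ⟨x.1 - p, by omega⟩ : Fin n) with hg
  have hmem1 : ∀ (x : Fin p), I x ∈ S := fun x => Finset.mem_image_of_mem I (Finset.mem_univ x)
  have hmem2 : ∀ (b : Fin (n - p)), ((e2 b : Fin n)) ∈ Sᶜ := fun b => (e2 b).2
  have ginj : Function.Injective g := by
    intro x y hxy
    replace hxy : g x = g y := hxy
    rw [hg] at hxy
    dsimp only at hxy
    by_cases hx : (x : ℕ) < p <;> by_cases hy : (y : ℕ) < p
    · rw [dif_pos hx, dif_pos hy] at hxy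
      have := congrArg Fin.val (hI hxy)
      exact Fin.ext this
    · rw [dif_pos hx, dif_neg hy] at hxy
      exact absurd (hxy ▸ hmem1 ⟨x.1, hx⟩) (Finset.mem_compl.mp (hmem2 _))
    · rw [dif_neg hx, dif_pos hy] at hxy
      exact absurd (hxy ▸ hmem1 ⟨y.1, hy⟩) (Finset.mem_compl.mp (hmem2 _))
    · rw [dif_neg hx, dif_neg hy] at hxy
      have h1 := e2.injective (Subtype.ext hxy)
      have h2 := congrArg Fin.val h1
      simp at h2
      exact Fin.ext (by omega)
  have gbij := Finite.injective_iff_bijective.mp ginj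
  refine ⟨Equiv.ofBijective g gbij, ?_⟩
  funext a
  show g (Fin.cast hN (Fin.castAdd (n - p) a)) = I a
  rw [hg]
  have hc : ((Fin.cast hN (Fin.castAdd (n - p) a)) : ℕ) < p := a.isLt
  simp only
  rw [dif_pos hc]
  rfl

lemma card_fixing {n p : ℕ} :
    (Finset.univ.filter
        (fun σ : Equiv.Perm (Fin n) => ∀ x : Fin n, (x : ℕ) < p → σ x = x)).card
      = Fintype.card (Equiv.Perm {x : Fin n // ¬ (x : ℕ) < p}) := by
  classical
  rw [← Fintype.card_subtype]
  refine Fintype.card_congr ?_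
  refine Equiv.trans ?_ (Equiv.Perm.subtypeEquivSubtypePerm (fun x : Fin n => ¬ (x : ℕ) < p)).symm
  refine Equiv.subtypeEquivRight ?_
  intro σ
  constructor
  · intro h a ha
    exact h a (not_not.mp ha)
  · intro h a ha
    exact h a (not_not.mpr ha)

lemma card_notlt {n p : ℕ} (hp : p ≤ n) :
    Fintype.card {x : Fin n // ¬ (x : ℕ) < p} = n - p := by
  rw [show (n - p) = Fintype.card (Fin (n - p)) by simp]
  refine Fintype.card_congr ?_
  refine ⟨fun x => ⟨x.1.1 - p, by have := x.1.isLt; have := x.2; omega⟩,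
    fun b => ⟨⟨p + b.1, by have := b.isLt; omega⟩, by simp⟩, ?_, ?_⟩
  · intro x
    apply Subtype.ext
    apply Fin.ext
    have := x.2
    simp
    omega
  · intro b
    apply Fin.ext
    simp

lemma fiber_card {n p : ℕ} (hp : p ≤ n) (hN : p + (n - p) = n)
    (I : Fin p → Fin n)
    (μ₀ : Equiv.Perm (Fin n))
    (hμ₀ : (fun a : Fin p => μ₀ (Fin.cast hN (Fin.castAdd (n - p) a))) = I) :
    (Finset.univ.filter
        (fun μ : Equiv.Perm (Fin n) =>
          (fun a : Fin p => μ (Fin.cast hN (Fin.castAdd (n - p) a))) = I)).card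
      = (n - p).factorial := by
  classical
  have key : (Finset.univ.filter
        (fun μ : Equiv.Perm (Fin n) =>
          (fun a : Fin p => μ (Fin.cast hN (Fin.castAdd (n - p) a))) = I)).card
      = (Finset.univ.filter
        (fun σ : Equiv.Perm (Fin n) => ∀ x : Fin n, (x : ℕ) < p → σ x = x)).card := by
    refine Finset.card_nbij' (fun μ => μ₀⁻¹ * μ) (fun σ => μ₀ * σ) ?_ ?_ ?_ ?_
    · intro μ hμ
      rw [Finset.mem_coe, Finset.mem_filter] at hμ ⊢
      refine ⟨Finset.mem_univ _, ?_⟩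
      intro x hx
      have hxa : x = Fin.cast hN (Fin.castAdd (n - p) (⟨x.1, hx⟩ : Fin p)) := rfl
      show μ₀⁻¹ (μ x) = x
      rw [hxa]
      have h1 := congrFun hμ.2 ⟨x.1, hx⟩
      have h2 := congrFun hμ₀ ⟨x.1, hx⟩
      rw [h1, ← h2]
      simp
    · intro σ hσ
      rw [Finset.mem_coe, Finset.mem_filter] at hσ ⊢
      refine ⟨Finset.mem_univ _, ?_⟩
      funext a
      show μ₀ (σ (Fin.cast hN (Fin.castAdd (n - p) a))) = I a
      have hx : ((Fin.cast hN (Fin.castAdd (n - p) a)) : ℕ) < p := a.isLt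
      rw [hσ.2 _ hx]
      exact congrFun hμ₀ a
    · intro μ _; simp [mul_assoc]
    · intro σ _; simp [← mul_assoc]
  rw [key, card_fixing, Fintype.card_perm, card_notlt hp]

lemma sum_perm_to_fun {n p : ℕ} (hp : p ≤ n) (hN : p + (n - p) = n)
    (G : (Fin p → Fin n) → ℝ)
    (hG : ∀ I : Fin p → Fin n, ¬ Function.Injective I → G I = 0) :
    ∑ μ : Equiv.Perm (Fin n), G (fun a => μ (Fin.cast hN (Fin.castAdd (n - p) a)))
      = ((n - p).factorial : ℝ) * ∑ I : Fin p → Fin n, G I := by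
  classical
  set res : Equiv.Perm (Fin n) → (Fin p → Fin n) :=
    fun μ a => μ (Fin.cast hN (Fin.castAdd (n - p) a)) with hres
  have hresinj : ∀ μ, Function.Injective (res μ) := by
    intro μ x y hxy
    have := congrArg Fin.val (μ.injective hxy)
    exact Fin.ext this
  rw [← Finset.sum_fiberwise' Finset.univ res G]
  rw [Finset.mul_sum]
  refine Finset.sum_congr rfl fun I _ => ?_
  rw [Finset.sum_const, nsmul_eq_mul]
  by_cases hI : Function.Injective I
  · obtain ⟨μ₀, hμ₀⟩ := exists_extension hp hN I hI
    rw [fiber_card hp hN I μ₀ hμ₀]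
  · rw [hG I hI, mul_zero, mul_zero]

end StarAux2


/-- For alternating `(p,q)`-double forms `ω, θ`, the pointwise inner
product satisfies `⟨ω,θ⟩ = *(ω·*θ)`, where the `(n,n)`-double form `ω·*θ` is
identified with a scalar by the generalized Hodge star. -/
theorem inner_eq_star_mul_star {n p q : ℕ} (hp : p ≤ n) (hq : q ≤ n)
    (ω θ : DForm n p q) (hω : DForm.IsAlt ω) (hθ : DForm.IsAlt θ) :
    DForm.innerPQ ω θ =
      DForm.cast' (by omega) (by omega)
        (DForm.hstar (n := n) (by omega) (by omega)
          (DForm.mul ω (DForm.hstar hp hq θ)))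
        Fin.elim0 Fin.elim0 := by
  classical
  open StarAux StarAux2 in
  obtain ⟨hω1, hω2, hω0⟩ := hω
  obtain ⟨hθ1, hθ2, hθ0⟩ := hθ
  have hN : p + (n - p) = n := by omega
  have hM : q + (n - q) = n := by omega
  have hP : p + (n - p) ≤ n := by omega
  have hQ : q + (n - q) ≤ n := by omega
  have h0 : n - (p + (n - p)) = 0 := by omega
  have h0' : n - (q + (n - q)) = 0 := by omega
  have hθ1' : ∀ (π : Equiv.Perm (Fin p)) (I : Fin p → Fin n) (J : Fin q → Fin n),
      θ (I ∘ ⇑π) J = StarAux.sgn π * θ I J := fun π I J => hθ1 π I J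
  have hθ2' : ∀ (τ : Equiv.Perm (Fin q)) (I : Fin p → Fin n) (J : Fin q → Fin n),
      θ I (J ∘ ⇑τ) = StarAux.sgn τ * θ I J := fun τ I J => hθ2 τ I J
  set Θ : DForm n (n - p) (n - q) := DForm.hstar hp hq θ with hΘdef
  symm
  show ((((p + (n - p)).factorial * (q + (n - q)).factorial : ℕ) : ℝ))⁻¹ *
      ∑ K : Fin (p + (n - p)) → Fin n, ∑ L : Fin (q + (n - q)) → Fin n,
        DForm.epsSign hP K (fun a => Fin.elim0 (Fin.cast h0 a)) *
          DForm.epsSign hQ L (fun b => Fin.elim0 (Fin.cast h0' b)) *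
          DForm.mul ω Θ K L
    = DForm.innerPQ ω θ
  -- Step E6/E7 pointwise value of Θ at permutation blocks
  have hΘval : ∀ (μ ν : Equiv.Perm (Fin n)),
      Θ (fun a => μ (Fin.cast hN (Fin.natAdd p a))) (fun b => ν (Fin.cast hM (Fin.natAdd q b)))
        = (((p.factorial * q.factorial : ℕ) : ℝ))⁻¹ *
            ((p.factorial : ℝ) * (StarAux.sgn μ * ((q.factorial : ℝ) * (StarAux.sgn ν *
              θ (fun a => μ (Fin.cast hN (Fin.castAdd (n - p) a)))
                (fun b => ν (Fin.cast hM (Fin.castAdd (n - q) b))))))) := by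
    intro μ ν
    show (((p.factorial * q.factorial : ℕ) : ℝ))⁻¹ *
        ∑ K' : Fin p → Fin n, ∑ L' : Fin q → Fin n,
          DForm.epsSign hp K' (fun a => μ (Fin.cast hN (Fin.natAdd p a))) *
            DForm.epsSign hq L' (fun b => ν (Fin.cast hM (Fin.natAdd q b))) * θ K' L' = _
    congr 1
    calc ∑ K' : Fin p → Fin n, ∑ L' : Fin q → Fin n,
          DForm.epsSign hp K' (fun a => μ (Fin.cast hN (Fin.natAdd p a))) *
            DForm.epsSign hq L' (fun b => ν (Fin.cast hM (Fin.natAdd q b))) * θ K' L'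
        = ∑ L' : Fin q → Fin n, ∑ K' : Fin p → Fin n,
            DForm.epsSign hp K' (fun a => μ (Fin.cast hN (Fin.natAdd p a))) *
              (DForm.epsSign hq L' (fun b => ν (Fin.cast hM (Fin.natAdd q b))) * θ K' L') := by
          rw [Finset.sum_comm]
          exact Finset.sum_congr rfl fun L' _ => Finset.sum_congr rfl fun K' _ => by ring
      _ = ∑ L' : Fin q → Fin n, (p.factorial : ℝ) * (StarAux.sgn μ *
            (DForm.epsSign hq L' (fun b => ν (Fin.cast hM (Fin.natAdd q b))) *
              θ (fun a => μ (Fin.cast hN (Fin.castAdd (n - p) a))) L')) := by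
          refine Finset.sum_congr rfl fun L' _ => ?_
          exact sum_eps_block hp hN μ
            (fun K' => DForm.epsSign hq L' (fun b => ν (Fin.cast hM (Fin.natAdd q b))) * θ K' L')
            (fun π K => by beta_reduce; rw [hθ1' π]; ring)
      _ = (p.factorial : ℝ) * (StarAux.sgn μ *
            ∑ L' : Fin q → Fin n,
              DForm.epsSign hq L' (fun b => ν (Fin.cast hM (Fin.natAdd q b))) *
                θ (fun a => μ (Fin.cast hN (Fin.castAdd (n - p) a))) L') := by
          simp only [Finset.mul_sum]
      _ = (p.factorial : ℝ) * (StarAux.sgn μ * ((q.factorial : ℝ) * (StarAux.sgn ν *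
            θ (fun a => μ (Fin.cast hN (Fin.castAdd (n - p) a)))
              (fun b => ν (Fin.cast hM (Fin.castAdd (n - q) b)))))) := by
          congr 1
          congr 1
          exact sum_eps_block hq hM ν
            (fun L' => θ (fun a => μ (Fin.cast hN (Fin.castAdd (n - p) a))) L')
            (fun τ L => by beta_reduce; rw [hθ2' τ])
  set c1 : ℝ := ((((p + (n - p)).factorial * (q + (n - q)).factorial : ℕ) : ℝ))⁻¹ with hc1
  set c2 : ℝ :=
    (((p.factorial * (n - p).factorial * q.factorial * (n - q).factorial : ℕ) : ℝ))⁻¹ with hc2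
  set cpq : ℝ := (((p.factorial * q.factorial : ℕ) : ℝ))⁻¹ with hcpq
  set Tf : (Fin (p + (n - p)) → Fin n) → (Fin (q + (n - q)) → Fin n) → ℝ :=
    fun g g' =>
      ω (fun a => g (Fin.castAdd (n - p) a)) (fun b => g' (Fin.castAdd (n - q) b)) *
        Θ (fun a => g (Fin.natAdd p a)) (fun b => g' (Fin.natAdd q b)) with hTf
  have hmul : ∀ ρ ρ' : Equiv.Perm (Fin n),
      DForm.mul ω Θ (fun b => ρ (Fin.cast hN b)) (fun b => ρ' (Fin.cast hM b))
        = c2 * ∑ σ : Equiv.Perm (Fin (p + (n - p))), ∑ τ : Equiv.Perm (Fin (q + (n - q))),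
            StarAux.sgn σ * StarAux.sgn τ *
              Tf (fun a => ρ (Fin.cast hN (σ a))) (fun b => ρ' (Fin.cast hM (τ b))) := by
    intro ρ ρ'
    show c2 * ∑ σ : Equiv.Perm (Fin (p + (n - p))), ∑ τ : Equiv.Perm (Fin (q + (n - q))),
        ((Equiv.Perm.sign σ : ℤ) : ℝ) * ((Equiv.Perm.sign τ : ℤ) : ℝ) *
          ω (fun a => ρ (Fin.cast hN (σ (Fin.castAdd (n - p) a))))
            (fun b => ρ' (Fin.cast hM (τ (Fin.castAdd (n - q) b)))) *
          Θ (fun a => ρ (Fin.cast hN (σ (Fin.natAdd p a))))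
            (fun b => ρ' (Fin.cast hM (τ (Fin.natAdd q b)))) = _
    congr 1
    refine Finset.sum_congr rfl fun σ _ => Finset.sum_congr rfl fun τ _ => ?_
    simp only [hTf]
    rw [StarAux.sgn_def σ, StarAux.sgn_def τ]
    ring
  have hTval : ∀ μ ν : Equiv.Perm (Fin n),
      Tf (fun a => μ (Fin.cast hN a)) (fun b => ν (Fin.cast hM b))
        = ω (fun a => μ (Fin.cast hN (Fin.castAdd (n - p) a)))
              (fun b => ν (Fin.cast hM (Fin.castAdd (n - q) b))) *
            (cpq * ((p.factorial : ℝ) * (StarAux.sgn μ * ((q.factorial : ℝ) * (StarAux.sgn ν *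
              θ (fun a => μ (Fin.cast hN (Fin.castAdd (n - p) a)))
                (fun b => ν (Fin.cast hM (Fin.castAdd (n - q) b)))))))) := by
    intro μ ν
    simp only [hTf]
    rw [hΘval μ ν]
  have hsum2 : ∀ I : Fin p → Fin n,
      ∑ ν : Equiv.Perm (Fin n),
          ω I (fun b => ν (Fin.cast hM (Fin.castAdd (n - q) b))) *
            θ I (fun b => ν (Fin.cast hM (Fin.castAdd (n - q) b)))
        = ((n - q).factorial : ℝ) * ∑ J : Fin q → Fin n, ω I J * θ I J :=
    fun I => sum_perm_to_fun hq hM (fun J => ω I J * θ I J)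
      (fun J hJ => by beta_reduce; rw [hω0 _ _ (Or.inr hJ), zero_mul])
  have hsum1 : ∑ μ : Equiv.Perm (Fin n), ∑ ν : Equiv.Perm (Fin n),
        ω (fun a => μ (Fin.cast hN (Fin.castAdd (n - p) a)))
            (fun b => ν (Fin.cast hM (Fin.castAdd (n - q) b))) *
          θ (fun a => μ (Fin.cast hN (Fin.castAdd (n - p) a)))
            (fun b => ν (Fin.cast hM (Fin.castAdd (n - q) b)))
      = ((n - p).factorial : ℝ) * ∑ I : Fin p → Fin n, ∑ ν : Equiv.Perm (Fin n),
          ω I (fun b => ν (Fin.cast hM (Fin.castAdd (n - q) b))) *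
            θ I (fun b => ν (Fin.cast hM (Fin.castAdd (n - q) b))) :=
    sum_perm_to_fun hp hN
      (fun I => ∑ ν : Equiv.Perm (Fin n),
        ω I (fun b => ν (Fin.cast hM (Fin.castAdd (n - q) b))) *
          θ I (fun b => ν (Fin.cast hM (Fin.castAdd (n - q) b))))
      (fun I hI => Finset.sum_eq_zero fun ν _ => by
        beta_reduce; rw [hω0 _ _ (Or.inl hI), zero_mul])
  calc c1 * ∑ K : Fin (p + (n - p)) → Fin n, ∑ L : Fin (q + (n - q)) → Fin n,
        DForm.epsSign hP K (fun a => Fin.elim0 (Fin.cast h0 a)) *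
          DForm.epsSign hQ L (fun b => Fin.elim0 (Fin.cast h0' b)) * DForm.mul ω Θ K L
      = c1 * ∑ K : Fin (p + (n - p)) → Fin n,
          DForm.epsSign hP K (fun a => Fin.elim0 (Fin.cast h0 a)) *
            ∑ L : Fin (q + (n - q)) → Fin n,
              DForm.epsSign hQ L (fun b => Fin.elim0 (Fin.cast h0' b)) * DForm.mul ω Θ K L := by
        congr 1
        refine Finset.sum_congr rfl fun K _ => ?_
        rw [Finset.mul_sum]
        exact Finset.sum_congr rfl fun L _ => by ring
    _ = c1 * ∑ ρ : Equiv.Perm (Fin n), StarAux.sgn ρ *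
          ∑ L : Fin (q + (n - q)) → Fin n,
            DForm.epsSign hQ L (fun b => Fin.elim0 (Fin.cast h0' b)) *
              DForm.mul ω Θ (fun b => ρ (Fin.cast hN b)) L := by
        congr 1
        exact sum_eps_top hP hN _ _
    _ = c1 * ∑ ρ : Equiv.Perm (Fin n), StarAux.sgn ρ *
          ∑ ρ' : Equiv.Perm (Fin n), StarAux.sgn ρ' *
            DForm.mul ω Θ (fun b => ρ (Fin.cast hN b)) (fun b => ρ' (Fin.cast hM b)) := by
        congr 1
        refine Finset.sum_congr rfl fun ρ _ => ?_
        congr 1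
        exact sum_eps_top hQ hM _ _
    _ = c1 * (c2 * ∑ ρ : Equiv.Perm (Fin n), ∑ σ : Equiv.Perm (Fin (p + (n - p))),
          StarAux.sgn ρ * StarAux.sgn σ *
            ∑ ρ' : Equiv.Perm (Fin n), ∑ τ : Equiv.Perm (Fin (q + (n - q))),
              StarAux.sgn ρ' * StarAux.sgn τ *
                Tf (fun a => ρ (Fin.cast hN (σ a))) (fun b => ρ' (Fin.cast hM (τ b)))) := by
        congr 1
        simp only [hmul]
        exact shuffle _ _ _ _ _ _
    _ = c1 * (c2 * (((p + (n - p)).factorial : ℝ) * ∑ μ : Equiv.Perm (Fin n), StarAux.sgn μ *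
          ∑ ρ' : Equiv.Perm (Fin n), ∑ τ : Equiv.Perm (Fin (q + (n - q))),
            StarAux.sgn ρ' * StarAux.sgn τ *
              Tf (fun a => μ (Fin.cast hN a)) (fun b => ρ' (Fin.cast hM (τ b))))) := by
        congr 2
        exact perm_merge hN
          (fun g => ∑ ρ' : Equiv.Perm (Fin n), ∑ τ : Equiv.Perm (Fin (q + (n - q))),
            StarAux.sgn ρ' * StarAux.sgn τ * Tf g (fun b => ρ' (Fin.cast hM (τ b))))
    _ = c1 * (c2 * (((p + (n - p)).factorial : ℝ) * ∑ μ : Equiv.Perm (Fin n), StarAux.sgn μ *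
          (((q + (n - q)).factorial : ℝ) * ∑ ν : Equiv.Perm (Fin n), StarAux.sgn ν *
            Tf (fun a => μ (Fin.cast hN a)) (fun b => ν (Fin.cast hM b))))) := by
        congr 3
        refine Finset.sum_congr rfl fun μ _ => ?_
        congr 1
        exact perm_merge hM (fun g' => Tf (fun a => μ (Fin.cast hN a)) g')
    _ = c1 * (c2 * (((p + (n - p)).factorial : ℝ) * (((q + (n - q)).factorial : ℝ) *
          (cpq * ((p.factorial : ℝ) * ((q.factorial : ℝ) *
            ∑ μ : Equiv.Perm (Fin n), ∑ ν : Equiv.Perm (Fin n),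
              ω (fun a => μ (Fin.cast hN (Fin.castAdd (n - p) a)))
                  (fun b => ν (Fin.cast hM (Fin.castAdd (n - q) b))) *
                θ (fun a => μ (Fin.cast hN (Fin.castAdd (n - p) a)))
                  (fun b => ν (Fin.cast hM (Fin.castAdd (n - q) b))))))))) := by
        congr 2
        simp only [hTval]
        simp only [Finset.mul_sum]
        refine Finset.sum_congr rfl fun μ _ => Finset.sum_congr rfl fun ν _ => ?_
        rcases StarAux.sgn_pm μ with h | h <;> rcases StarAux.sgn_pm ν with h' | h' <;>
          rw [h, h'] <;> ring
    _ = cpq * ∑ I : Fin p → Fin n, ∑ J : Fin q → Fin n, ω I J * θ I J := by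
        rw [hsum1]
        simp only [hsum2]
        rw [← Finset.mul_sum]
        have f1 : ((p.factorial : ℕ) : ℝ) ≠ 0 := Nat.cast_ne_zero.mpr p.factorial_ne_zero
        have f2 : ((q.factorial : ℕ) : ℝ) ≠ 0 := Nat.cast_ne_zero.mpr q.factorial_ne_zero
        have f3 : (((n - p).factorial : ℕ) : ℝ) ≠ 0 :=
          Nat.cast_ne_zero.mpr (n - p).factorial_ne_zero
        have f4 : (((n - q).factorial : ℕ) : ℝ) ≠ 0 :=
          Nat.cast_ne_zero.mpr (n - q).factorial_ne_zero
        have f5 : (((p + (n - p)).factorial : ℕ) : ℝ) ≠ 0 :=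
          Nat.cast_ne_zero.mpr (p + (n - p)).factorial_ne_zero
        have f6 : (((q + (n - q)).factorial : ℕ) : ℝ) ≠ 0 :=
          Nat.cast_ne_zero.mpr (q + (n - q)).factorial_ne_zero
        rw [hc1, hc2, hcpq]
        push_cast
        field_simp
    _ = DForm.innerPQ ω θ := rfl
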